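/- If the nonempty spectrahedron F = {X ⪰ 0 : A(X) = b} contains a nondegenerate point, then strict feasibility holds for F, i.e. there exists X ≻ 0 with A(X) = b. -/

import Mathlib

open Matrix Set

noncomputable section

attribute [local instance] Matrix.normedAddCommGroup Matrix.normedSpace

/-- The linear map `A X = (⟨Aᵢ, X⟩)ᵢ` (trace inner product). -/
def calA {n m : ℕ} (A : Fin m → Matrix (Fin n) (Fin n) ℝ)
    (X : Matrix (Fin n) (Fin n) ℝ) : Fin m → ℝ := fun i => (A i * X).trace

/-- The adjoint map `A* λ = ∑ᵢ λᵢ Aᵢ`. -/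
def adjA {n m : ℕ} (A : Fin m → Matrix (Fin n) (Fin n) ℝ) (lam : Fin m → ℝ) :
    Matrix (Fin n) (Fin n) ℝ := ∑ i, lam i • A i

/-- The spectrahedron `F = {X ⪰ 0 : A X = b}`. -/
def spectra {n m : ℕ} (A : Fin m → Matrix (Fin n) (Fin n) ℝ) (b : Fin m → ℝ) :
    Set (Matrix (Fin n) (Fin n) ℝ) := {X | X.PosSemidef ∧ calA A X = b}

/-- The PSD cone `Sⁿ₊` as a subset of matrix space. -/
def PSDcone (n : ℕ) : Set (Matrix (Fin n) (Fin n) ℝ) := {Y | Y.PosSemidef}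

/-- `f` is a face of the convex cone `K`. -/
def IsFaceOfCone {k : ℕ} (f K : Set (Matrix (Fin k) (Fin k) ℝ)) : Prop :=
  f ⊆ K ∧ Convex ℝ f ∧ (∀ c : ℝ, 0 ≤ c → ∀ x ∈ f, c • x ∈ f) ∧
    ∀ x ∈ K, ∀ y ∈ K, x + y ∈ f → x ∈ f ∧ y ∈ f

/-- `face(X, Sⁿ₊)`: the minimal face of `Sⁿ₊` containing `X`, i.e. the intersection of
all faces of `Sⁿ₊` containing `X`. -/
def minFaceOfPoint {n : ℕ} (X : Matrix (Fin n) (Fin n) ℝ) :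
    Set (Matrix (Fin n) (Fin n) ℝ) :=
  ⋂₀ {g | IsFaceOfCone g (PSDcone n) ∧ X ∈ g}

/-- The conjugate face `f^Δ = f^⊥ ∩ Sⁿ₊` of a subset `f` of `Sⁿ₊`. -/
def conjFace {n : ℕ} (f : Set (Matrix (Fin n) (Fin n) ℝ)) :
    Set (Matrix (Fin n) (Fin n) ℝ) :=
  {Z | Z.PosSemidef ∧ ∀ Y ∈ f, (Y * Z).trace = 0}

/-- `X` is a nondegenerate point: `span(face(X,Sⁿ₊)^Δ) ∩ range(A*) = {0}`. -/
def Nondegenerate {n m : ℕ} (A : Fin m → Matrix (Fin n) (Fin n) ℝ)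
    (X : Matrix (Fin n) (Fin n) ℝ) : Prop :=
  Submodule.span ℝ (conjFace (minFaceOfPoint X)) ⊓ Submodule.span ℝ (Set.range A) = ⊥

/-! ### Auxiliary lemmas -/

namespace Stmt12Aux

variable {n m : ℕ}

lemma star_id (x : Fin n → ℝ) : star x = x := by simp

lemma isHermitian_of_isSymm {M : Matrix (Fin n) (Fin n) ℝ} (h : M.IsSymm) : M.IsHermitian := by
  rwa [Matrix.IsHermitian, conjTranspose_eq_transpose_of_trivial]

lemma trace_psd_nonneg {M : Matrix (Fin n) (Fin n) ℝ} (h : M.PosSemidef) : 0 ≤ M.trace := by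
  rw [Matrix.trace]
  refine Finset.sum_nonneg fun i _ => ?_
  have := h.dotProduct_mulVec_nonneg (Pi.single i 1)
  simpa [dotProduct, mulVec, Pi.single_apply, Finset.mul_sum] using this

lemma trace_mul_psd_nonneg {X Y : Matrix (Fin n) (Fin n) ℝ} (hX : X.PosSemidef)
    (hY : Y.PosSemidef) : 0 ≤ (X * Y).trace := by
  obtain ⟨k, v, rfl⟩ := Matrix.posSemidef_iff_eq_sum_vecMulVec.mp hX
  rw [Finset.sum_mul, Matrix.trace_sum]
  refine Finset.sum_nonneg fun i _ => ?_
  rw [Matrix.trace_mul_comm]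
  have hq := hY.dotProduct_mulVec_nonneg (v i)
  have e : (Y * vecMulVec (v i) (star (v i))).trace = star (v i) ⬝ᵥ Y *ᵥ v i := by
    simp only [star_trivial, Matrix.trace, Matrix.diag, Matrix.mul_apply, vecMulVec_apply,
      dotProduct, mulVec, Finset.mul_sum]
    exact Finset.sum_congr rfl fun a _ => Finset.sum_congr rfl fun b _ => by ring
  rw [e]
  exact hq

lemma quad_eq_trace (Z : Matrix (Fin n) (Fin n) ℝ) (x : Fin n → ℝ) :
    (Z * vecMulVec x x).trace = x ⬝ᵥ Z *ᵥ x := by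
  simp only [Matrix.trace, Matrix.diag, Matrix.mul_apply, vecMulVec_apply, dotProduct, mulVec,
    dotProduct]
  congr 1; ext i
  rw [Finset.mul_sum]
  congr 1; ext j
  ring

/-- The quadratic form of a matrix. -/
def Q (M : Matrix (Fin n) (Fin n) ℝ) (x : Fin n → ℝ) : ℝ := x ⬝ᵥ M *ᵥ x

lemma Q_eq (M : Matrix (Fin n) (Fin n) ℝ) (x : Fin n → ℝ) :
    Q M x = ∑ i, ∑ j, x i * M i j * x j := by
  simp only [Q, dotProduct, mulVec, Finset.mul_sum]
  exact Finset.sum_congr rfl fun i _ => Finset.sum_congr rfl fun j _ => by ring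

lemma Q_cont (M : Matrix (Fin n) (Fin n) ℝ) : Continuous fun x => Q M x := by
  simp only [Q_eq]
  exact continuous_finset_sum _ fun i _ => continuous_finset_sum _ fun j _ =>
    ((continuous_apply i).mul continuous_const).mul (continuous_apply j)

lemma Q_smul_vec (M : Matrix (Fin n) (Fin n) ℝ) (c : ℝ) (x : Fin n → ℝ) :
    Q M (c • x) = c^2 * Q M x := by
  simp only [Q_eq, Pi.smul_apply, smul_eq_mul, Finset.mul_sum]
  exact Finset.sum_congr rfl fun i _ => Finset.sum_congr rfl fun j _ => by ring

lemma Q_split (M M₀ : Matrix (Fin n) (Fin n) ℝ) (x : Fin n → ℝ) :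
    Q M x = Q M₀ x + Q (M - M₀) x := by
  simp only [Q_eq, Matrix.sub_apply, ← Finset.sum_add_distrib]
  exact Finset.sum_congr rfl fun i _ => Finset.sum_congr rfl fun j _ => by ring

lemma Q_addM (M N : Matrix (Fin n) (Fin n) ℝ) (x : Fin n → ℝ) :
    Q (M + N) x = Q M x + Q N x := by
  simp only [Q_eq, Matrix.add_apply, ← Finset.sum_add_distrib]
  exact Finset.sum_congr rfl fun i _ => Finset.sum_congr rfl fun j _ => by ring

lemma Q_smulM (c : ℝ) (M : Matrix (Fin n) (Fin n) ℝ) (x : Fin n → ℝ) :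
    Q (c • M) x = c * Q M x := by
  simp only [Q_eq, Matrix.smul_apply, smul_eq_mul, Finset.mul_sum]
  exact Finset.sum_congr rfl fun i _ => Finset.sum_congr rfl fun j _ => by ring

lemma Q_negM (M : Matrix (Fin n) (Fin n) ℝ) (x : Fin n → ℝ) :
    Q (-M) x = -Q M x := by
  simp only [Q_eq, Matrix.neg_apply, ← Finset.sum_neg_distrib]
  exact Finset.sum_congr rfl fun i _ => Finset.sum_congr rfl fun j _ => by ring

lemma Q_transpose (M : Matrix (Fin n) (Fin n) ℝ) (x : Fin n → ℝ) :
    Q Mᵀ x = Q M x := by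
  rw [Q_eq, Q_eq, Finset.sum_comm]
  exact Finset.sum_congr rfl fun i _ => Finset.sum_congr rfl fun j _ => by
    rw [Matrix.transpose_apply]; ring

lemma dot_self_pos {x : Fin n → ℝ} (hx : x ≠ 0) : 0 < x ⬝ᵥ x := by
  have h0 : 0 ≤ x ⬝ᵥ x := Finset.sum_nonneg fun i _ => mul_self_nonneg _
  rcases h0.lt_or_eq with h | h
  · exact h
  · exact absurd (dotProduct_self_eq_zero.mp h.symm) hx

lemma Q_one (x : Fin n → ℝ) : Q (1 : Matrix (Fin n) (Fin n) ℝ) x = x ⬝ᵥ x := by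
  simp [Q, Matrix.one_mulVec]

lemma Q_vecMulVec (x y : Fin n → ℝ) : Q (vecMulVec x x) y = (x ⬝ᵥ y)^2 := by
  rw [Q_eq]
  have h : (x ⬝ᵥ y)^2 = (∑ i, x i * y i) * (∑ j, x j * y j) := by rw [sq]; rfl
  rw [h, Finset.sum_mul_sum]
  exact Finset.sum_congr rfl fun i _ => Finset.sum_congr rfl fun j _ => by
    rw [vecMulVec_apply]; ring

lemma psd_isSymm {P : Matrix (Fin n) (Fin n) ℝ} (h : P.PosSemidef) : P.IsSymm := by
  rw [Matrix.IsSymm, ← conjTranspose_eq_transpose_of_trivial, h.1]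

lemma psd_of_quad {M : Matrix (Fin n) (Fin n) ℝ} (h : M.IsSymm)
    (hq : ∀ x : Fin n → ℝ, 0 ≤ Q M x) : M.PosSemidef :=
  Matrix.PosSemidef.of_dotProduct_mulVec_nonneg (isHermitian_of_isSymm h) (fun x => by simpa [Q] using hq x)

lemma psd_quad_nonneg {P : Matrix (Fin n) (Fin n) ℝ} (h : P.PosSemidef) (x : Fin n → ℝ) :
    0 ≤ Q P x := by
  have := h.dotProduct_mulVec_nonneg x
  simpa [Q] using this

lemma psd_smul {c : ℝ} {P : Matrix (Fin n) (Fin n) ℝ} (hc : 0 ≤ c) (hP : P.PosSemidef) :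
    (c • P).PosSemidef :=
  psd_of_quad ((psd_isSymm hP).smul c)
    (fun x => by rw [Q_smulM]; exact mul_nonneg hc (psd_quad_nonneg hP x))

/-- The spectrahedral constraint map as a linear map. -/
def calALM (A : Fin m → Matrix (Fin n) (Fin n) ℝ) :
    Matrix (Fin n) (Fin n) ℝ →ₗ[ℝ] (Fin m → ℝ) where
  toFun := calA A
  map_add' X Y := by
    funext i; simp [calA, Matrix.mul_add]
  map_smul' c X := by
    funext i; simp [calA, mul_smul_comm]

lemma trace_sum_smul (A : Fin m → Matrix (Fin n) (Fin n) ℝ) (lam : Fin m → ℝ)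
    (M : Matrix (Fin n) (Fin n) ℝ) :
    ((∑ i, lam i • A i) * M).trace = ∑ i, lam i * (A i * M).trace := by
  rw [Finset.sum_mul, Matrix.trace_sum]
  congr 1; ext i
  rw [Matrix.smul_mul, Matrix.trace_smul, smul_eq_mul]

lemma eq_zero_of_trace_mul_self (Z : Matrix (Fin n) (Fin n) ℝ)
    (h : (Z * Zᵀ).trace = 0) : Z = 0 := by
  have hsum : ∑ i, ∑ j, (Z i j)^2 = 0 := by
    rw [← h]
    simp only [Matrix.trace, Matrix.diag, Matrix.mul_apply, Matrix.transpose_apply]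
    congr 1; ext i; congr 1; ext j; ring
  ext i j
  have h1 : ∀ i ∈ Finset.univ, (0:ℝ) ≤ ∑ j, (Z i j)^2 :=
    fun i _ => Finset.sum_nonneg fun j _ => sq_nonneg _
  have h2 := (Finset.sum_eq_zero_iff_of_nonneg h1).mp hsum i (Finset.mem_univ i)
  have h3 := (Finset.sum_eq_zero_iff_of_nonneg (fun j _ => sq_nonneg (Z i j))).mp h2 j
    (Finset.mem_univ j)
  simpa using pow_eq_zero_iff two_ne_zero |>.mp h3

lemma dual_pi_expand (ψ : (Fin m → ℝ) →ₗ[ℝ] ℝ) (v : Fin m → ℝ) :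
    ψ v = ∑ i, v i * ψ (Pi.single i 1) := by
  conv_lhs => rw [← Finset.univ_sum_single v]
  rw [map_sum]
  congr 1; ext i
  have hsing : Pi.single (M := fun _ : Fin m => ℝ) i (v i)
      = v i • (Pi.single i (1:ℝ) : Fin m → ℝ) := by
    funext j; by_cases hj : j = i <;> simp [Pi.single_apply, hj]
  rw [hsing, _root_.map_smul, smul_eq_mul]

lemma calALM_surj (A : Fin m → Matrix (Fin n) (Fin n) ℝ)
    (hLI : LinearIndependent ℝ A) : LinearMap.range (calALM A) = ⊤ := by
  by_contra h
  obtain ⟨φ, hφ0, hφ⟩ := Submodule.exists_dual_map_eq_bot_of_lt_top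
    (lt_top_iff_ne_top.mpr h) inferInstance
  set lam : Fin m → ℝ := fun i => φ (Pi.single i 1) with hlam
  have hzero : ∀ M : Matrix (Fin n) (Fin n) ℝ, ((∑ i, lam i • A i) * M).trace = 0 := by
    intro M
    have hmem : φ (calALM A M) = 0 := by
      have : φ (calALM A M) ∈ Submodule.map φ (LinearMap.range (calALM A)) :=
        Submodule.mem_map_of_mem (LinearMap.mem_range_self _ M)
      rw [hφ] at this
      simpa using this
    rw [trace_sum_smul]
    rw [dual_pi_expand φ] at hmem
    rw [← hmem]
    congr 1; ext i
    rw [mul_comm]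
    rfl
  have hZ0 : (∑ i, lam i • A i) = 0 :=
    eq_zero_of_trace_mul_self _ (hzero _)
  have hl0 : ∀ i, lam i = 0 := Fintype.linearIndependent_iff.mp hLI lam hZ0
  apply hφ0
  apply LinearMap.ext
  intro v
  rw [dual_pi_expand φ]
  have hz : ∀ i, φ (Pi.single i 1) = 0 := fun i => hl0 i
  simp [hz]

lemma Q_bound (E : Matrix (Fin n) (Fin n) ℝ) (x : Fin n → ℝ) :
    |Q E x| ≤ (n:ℝ)^2 * ‖E‖ * ‖x‖^2 := by
  rw [Q_eq]
  calc |∑ i, ∑ j, x i * E i j * x j| ≤ ∑ i, ∑ j, |x i * E i j * x j| := by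
        refine (Finset.abs_sum_le_sum_abs _ _).trans ?_
        exact Finset.sum_le_sum fun i _ => Finset.abs_sum_le_sum_abs _ _
    _ ≤ ∑ _i : Fin n, ∑ _j : Fin n, ‖x‖ * ‖E‖ * ‖x‖ := by
        refine Finset.sum_le_sum fun i _ => Finset.sum_le_sum fun j _ => ?_
        rw [abs_mul, abs_mul]
        have h1 : |x i| ≤ ‖x‖ := by simpa using norm_le_pi_norm x i
        have h2 : |E i j| ≤ ‖E‖ := by
          simpa using Matrix.norm_entry_le_entrywise_sup_norm E (i := i) (j := j)
        have h3 : |x j| ≤ ‖x‖ := by simpa using norm_le_pi_norm x j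
        exact mul_le_mul (mul_le_mul h1 h2 (abs_nonneg _) (norm_nonneg _)) h3
          (abs_nonneg _) (mul_nonneg (norm_nonneg _) (norm_nonneg _))
    _ = (n:ℝ)^2 * ‖E‖ * ‖x‖^2 := by
        simp [Finset.sum_const, Finset.card_univ]
        ring

lemma sOpen (hn : 0 < n) :
    IsOpen {M : Matrix (Fin n) (Fin n) ℝ | ∀ x : Fin n → ℝ, x ≠ 0 → 0 < Q M x} := by
  haveI : Nonempty (Fin n) := ⟨⟨0, hn⟩⟩
  refine Metric.isOpen_iff.mpr ?_
  intro M₀ hM₀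
  obtain ⟨x₀, hx₀s, hmin⟩ := (isCompact_sphere (0 : Fin n → ℝ) 1).exists_isMinOn
    (NormedSpace.sphere_nonempty.mpr zero_le_one) (Q_cont M₀).continuousOn
  have hx₀n : ‖x₀‖ = 1 := by simpa using mem_sphere_zero_iff_norm.mp hx₀s
  set ε := Q M₀ x₀ with hεdef
  have hε : 0 < ε := hM₀ x₀ (fun h => by rw [h] at hx₀n; simp at hx₀n)
  refine ⟨ε / ((n:ℝ)^2 + 1), by positivity, ?_⟩
  intro M hM
  intro x hx
  have hxn : 0 < ‖x‖ := norm_pos_iff.mpr hx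
  have hy : (‖x‖⁻¹ • x) ∈ Metric.sphere (0 : Fin n → ℝ) 1 := by
    rw [mem_sphere_zero_iff_norm, norm_smul, norm_inv, norm_norm, inv_mul_cancel₀ hxn.ne']
  have h1 : ε ≤ Q M₀ (‖x‖⁻¹ • x) := hmin hy
  rw [Q_smul_vec] at h1
  have h3 : ε * ‖x‖^2 ≤ Q M₀ x := by
    have h1' := mul_le_mul_of_nonneg_right h1 (le_of_lt (pow_pos hxn 2))
    have hq : (‖x‖⁻¹)^2 * Q M₀ x * ‖x‖^2 = Q M₀ x := by
      field_simp
    linarith [hq ▸ h1']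
  have hdist : ‖M - M₀‖ < ε / ((n:ℝ)^2 + 1) := by
    rw [← dist_eq_norm]
    exact Metric.mem_ball.mp hM
  have h4 := Q_bound (M - M₀) x
  have h5 := Q_split M M₀ x
  have hn2 : (0:ℝ) ≤ (n:ℝ)^2 := sq_nonneg _
  have habs := abs_le.mp h4
  have hkey : (n:ℝ)^2 * ‖M - M₀‖ < ε := by
    have hpos : (0:ℝ) < (n:ℝ)^2 + 1 := by positivity
    have h6 : (n:ℝ)^2 * (ε / ((n:ℝ)^2 + 1)) < ε := by
      rw [mul_comm, div_mul_eq_mul_div, div_lt_iff₀ hpos]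
      nlinarith
    calc (n:ℝ)^2 * ‖M - M₀‖ ≤ (n:ℝ)^2 * (ε / ((n:ℝ)^2 + 1)) :=
          mul_le_mul_of_nonneg_left hdist.le hn2
      _ < ε := h6
  rw [h5]
  nlinarith [mul_pos (sub_pos.mpr hkey) (pow_pos hxn 2), habs.1, h3]

end Stmt12Aux

open Stmt12Aux

/-- if the nonempty spectrahedron `F` contains a nondegenerate point, then
strict feasibility holds: there exists `X ≻ 0` with `A X = b`. -/
theorem stmt12 {n m : ℕ} (A : Fin m → Matrix (Fin n) (Fin n) ℝ)
    (hA : ∀ i, (A i).IsSymm) (hLI : LinearIndependent ℝ A) (b : Fin m → ℝ)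
    (hFne : (spectra A b).Nonempty)
    (hnd : ∃ X ∈ spectra A b, Nondegenerate A X) :
    ∃ X : Matrix (Fin n) (Fin n) ℝ, X.PosDef ∧ calA A X = b := by
  by_contra hstrict
  push_neg at hstrict
  obtain ⟨X₀, hX₀F, hX₀nd⟩ := hnd
  obtain ⟨hX₀psd, hX₀b⟩ := hX₀F
  -- the degenerate case n = 0 : X₀ itself is positive definite
  rcases Nat.eq_zero_or_pos n with hn | hn
  · subst hn
    exact hstrict X₀ ⟨hX₀psd.1, fun x hx => absurd (Subsingleton.elim x 0) hx⟩ hX₀b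
  -- the open convex set of matrices with positive definite quadratic form
  have hsconv : Convex ℝ {M : Matrix (Fin n) (Fin n) ℝ | ∀ x : Fin n → ℝ, x ≠ 0 → 0 < Q M x} := by
    intro M hM M' hM' a b' ha hb' hab
    simp only [Set.mem_setOf_eq] at hM hM' ⊢
    intro x hx
    rw [Q_addM, Q_smulM, Q_smulM]
    rcases ha.lt_or_eq with hpos | hzero
    · have h1 : 0 < a * Q M x := mul_pos hpos (hM x hx)
      have h2 : 0 ≤ b' * Q M' x := mul_nonneg hb' (hM' x hx).le
      linarith
    · have hb1 : b' = 1 := by rw [← hzero] at hab; linarith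
      rw [← hzero, hb1]
      simpa using hM' x hx
  have htconv : Convex ℝ {M : Matrix (Fin n) (Fin n) ℝ | calA A M = b} := by
    intro M hM M' hM' a b' ha hb' hab
    simp only [Set.mem_setOf_eq] at hM hM' ⊢
    show calALM A (a • M + b' • M') = b
    rw [map_add, _root_.map_smul, _root_.map_smul]
    show a • calA A M + b' • calA A M' = b
    rw [hM, hM', ← add_smul, hab, one_smul]
  have hdisj : Disjoint {M : Matrix (Fin n) (Fin n) ℝ | ∀ x : Fin n → ℝ, x ≠ 0 → 0 < Q M x}
      {M : Matrix (Fin n) (Fin n) ℝ | calA A M = b} := by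
    rw [Set.disjoint_left]
    intro M hMs hMt
    simp only [Set.mem_setOf_eq] at hMs hMt
    set Ms : Matrix (Fin n) (Fin n) ℝ := (1/2 : ℝ) • (M + Mᵀ) with hMsdef
    have hsym : Ms.IsSymm := by
      rw [Matrix.IsSymm, hMsdef, transpose_smul, transpose_add, transpose_transpose, add_comm]
    have hpd : Ms.PosDef := by
      refine Matrix.PosDef.of_dotProduct_mulVec_pos (isHermitian_of_isSymm hsym) fun x hx => ?_
      have hQ : Q Ms x = Q M x := by
        rw [hMsdef, Q_smulM, Q_addM, Q_transpose]
        ring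
      have : 0 < Q Ms x := by rw [hQ]; exact hMs x hx
      simpa [Q] using this
    have hb' : calA A Ms = b := by
      funext i
      have htr : (A i * Mᵀ).trace = (A i * M).trace := by
        calc (A i * Mᵀ).trace = ((A i * Mᵀ)ᵀ).trace := (Matrix.trace_transpose _).symm
          _ = (M * (A i)ᵀ).trace := by rw [Matrix.transpose_mul, transpose_transpose]
          _ = ((A i)ᵀ * M).trace := Matrix.trace_mul_comm _ _
          _ = (A i * M).trace := by rw [hA i]
      have hbi : (A i * M).trace = b i := congrFun hMt i
      show (A i * Ms).trace = b i
      rw [hMsdef, mul_smul_comm, Matrix.mul_add, Matrix.trace_smul, Matrix.trace_add, htr,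
        smul_eq_mul, hbi]
      ring
    exact hstrict Ms hpd hb'
  obtain ⟨f, u, hfu, hut⟩ := geometric_hahn_banach_open hsconv (sOpen hn) htconv hdisj
  -- the functional vanishes on the kernel of the constraint map
  have hker : ∀ W : Matrix (Fin n) (Fin n) ℝ, calALM A W = 0 → f W = 0 := by
    intro W hW
    by_contra hfW
    have hmem : ∀ c : ℝ, (X₀ + c • W) ∈ {M : Matrix (Fin n) (Fin n) ℝ | calA A M = b} := by
      intro c
      simp only [Set.mem_setOf_eq]
      show calALM A (X₀ + c • W) = b
      rw [map_add, _root_.map_smul, hW, smul_zero, add_zero]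
      exact hX₀b
    set c := (u - f X₀ - 1) / f W with hc
    have h1 := hut _ (hmem c)
    rw [map_add, _root_.map_smul, smul_eq_mul] at h1
    have h2 : c * f W = u - f X₀ - 1 := div_mul_cancel₀ _ hfW
    rw [h2] at h1
    linarith
  -- represent the functional via a matrix Z in the range of the adjoint
  obtain ⟨σ, hσ⟩ := (calALM A).exists_rightInverse_of_surjective (calALM_surj A hLI)
  set lam : Fin m → ℝ := fun i => f (σ (Pi.single i 1)) with hlamdef
  set Z : Matrix (Fin n) (Fin n) ℝ := ∑ i, lam i • A i with hZdef
  have hσv : ∀ v, calALM A (σ v) = v := by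
    intro v
    have := LinearMap.ext_iff.mp hσ v
    simpa using this
  have hfZ : ∀ M : Matrix (Fin n) (Fin n) ℝ, f M = (Z * M).trace := by
    intro M
    have h1 : calALM A (σ (calALM A M) - M) = 0 := by
      rw [map_sub, hσv, sub_self]
    have h2 : f (σ (calALM A M)) - f M = 0 := by
      have h := hker _ h1
      rwa [map_sub] at h
    have h3 : f (σ (calALM A M)) = ∑ i, (calALM A M) i * lam i := by
      have h := dual_pi_expand (f.toLinearMap ∘ₗ σ) (calALM A M)
      simpa [hlamdef] using h
    rw [hZdef, trace_sum_smul]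
    have h4 : ∀ i, (calALM A M) i = (A i * M).trace := fun i => rfl
    calc f M = f (σ (calALM A M)) := by linarith
      _ = ∑ i, (calALM A M) i * lam i := h3
      _ = ∑ i, lam i * (A i * M).trace :=
          Finset.sum_congr rfl fun i _ => by rw [h4, mul_comm]
  -- basic memberships
  have h1mem : (1 : Matrix (Fin n) (Fin n) ℝ) ∈
      {M : Matrix (Fin n) (Fin n) ℝ | ∀ x : Fin n → ℝ, x ≠ 0 → 0 < Q M x} := by
    simp only [Set.mem_setOf_eq]
    intro x hx
    rw [Q_one]
    exact dot_self_pos hx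
  have hX₀t : X₀ ∈ {M : Matrix (Fin n) (Fin n) ℝ | calA A M = b} := hX₀b
  -- u is nonnegative
  have hu0 : 0 ≤ u := by
    by_contra hu
    push_neg at hu
    have hf1 : ∀ c : ℝ, 0 < c → c * f 1 < u := by
      intro c hc
      have hcmem : (c • (1 : Matrix (Fin n) (Fin n) ℝ)) ∈
          {M : Matrix (Fin n) (Fin n) ℝ | ∀ x : Fin n → ℝ, x ≠ 0 → 0 < Q M x} := by
        simp only [Set.mem_setOf_eq]
        intro x hx
        rw [Q_smulM, Q_one]
        exact mul_pos hc (dot_self_pos hx)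
      have := hfu _ hcmem
      rwa [_root_.map_smul, smul_eq_mul] at this
    rcases le_or_gt 0 (f 1) with h | h
    · have := hf1 1 one_pos
      linarith
    · have hcpos : 0 < u / (2 * f 1) := div_pos_of_neg_of_neg hu (by linarith)
      have := hf1 _ hcpos
      have hne : f 1 ≠ 0 := ne_of_lt h
      have hcc : u / (2 * f 1) * f 1 = u / 2 := by
        rw [div_mul_eq_mul_div, mul_comm u (f 1), mul_comm 2 (f 1),
          mul_div_mul_left _ _ hne]
      rw [hcc] at this
      linarith
  -- every member of the open cone has nonpositive value
  have hfle : ∀ Y ∈ {M : Matrix (Fin n) (Fin n) ℝ | ∀ x : Fin n → ℝ, x ≠ 0 → 0 < Q M x},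
      f Y ≤ 0 := by
    intro Y hY
    by_contra hfY
    push_neg at hfY
    have hc : 0 < (u + 1) / f Y := by positivity
    have hmem : (((u + 1) / f Y) • Y) ∈
        {M : Matrix (Fin n) (Fin n) ℝ | ∀ x : Fin n → ℝ, x ≠ 0 → 0 < Q M x} := by
      simp only [Set.mem_setOf_eq]
      intro x hx
      rw [Q_smulM]
      exact mul_pos hc (hY x hx)
    have := hfu _ hmem
    rw [_root_.map_smul, smul_eq_mul, div_mul_cancel₀ _ (ne_of_gt hfY)] at this
    linarith
  -- the quadratic form of Z is nonpositive everywhere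
  have hQZle : ∀ x : Fin n → ℝ, Q Z x ≤ 0 := by
    intro x
    by_contra hq
    push_neg at hq
    set q := Q Z x with hqdef
    set ε := q / (|Z.trace| + 1) with hεdef
    have hεpos : 0 < ε := div_pos hq (by positivity)
    have hmemε : (vecMulVec x x + ε • 1) ∈
        {M : Matrix (Fin n) (Fin n) ℝ | ∀ y : Fin n → ℝ, y ≠ 0 → 0 < Q M y} := by
      simp only [Set.mem_setOf_eq]
      intro y hy
      rw [Q_addM, Q_vecMulVec, Q_smulM, Q_one]
      have h1 := dot_self_pos hy
      nlinarith [sq_nonneg (x ⬝ᵥ y)]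
    have hle := hfle _ hmemε
    rw [hfZ, Matrix.mul_add, Matrix.trace_add, quad_eq_trace, mul_smul_comm, Matrix.mul_one,
      Matrix.trace_smul, smul_eq_mul] at hle
    have hQrfl : Q Z x = x ⬝ᵥ Z *ᵥ x := rfl
    rw [← hQrfl, ← hqdef] at hle
    have hεmul : ε * (|Z.trace| + 1) = q := div_mul_cancel₀ _ (by positivity)
    have hprod : 0 ≤ ε * (Z.trace + |Z.trace|) :=
      mul_nonneg hεpos.le (by linarith [neg_abs_le Z.trace])
    rw [mul_add] at hprod hεmul
    rw [mul_one] at hεmul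
    linarith
  -- W = -Z is positive semidefinite
  have hZsymm : Z.IsSymm := by
    rw [Matrix.IsSymm, hZdef, Matrix.transpose_sum]
    exact Finset.sum_congr rfl fun i _ => by rw [transpose_smul, hA i]
  have hWpsd : (-Z).PosSemidef := by
    refine psd_of_quad hZsymm.neg fun x => ?_
    rw [Q_negM]
    linarith [hQZle x]
  -- ⟨Z, X₀⟩ = 0
  have huX : u ≤ (Z * X₀).trace := by
    have := hut _ hX₀t
    rwa [hfZ] at this
  have hWX₀ : ((-Z) * X₀).trace = 0 := by
    have h1 : 0 ≤ ((-Z) * X₀).trace := trace_mul_psd_nonneg hWpsd hX₀psd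
    have h2 : ((-Z) * X₀).trace = -(Z * X₀).trace := by
      rw [Matrix.neg_mul, Matrix.trace_neg]
    linarith
  -- the conjugate face membership via a face of the PSD cone
  have hface : IsFaceOfCone
      {Y : Matrix (Fin n) (Fin n) ℝ | Y.PosSemidef ∧ (Y * (-Z)).trace = 0} (PSDcone n) := by
    refine ⟨fun Y hY => hY.1, ?_, ?_, ?_⟩
    · intro Y hY Y' hY' a b' ha hb' hab
      refine ⟨Matrix.PosSemidef.add (psd_smul ha hY.1) (psd_smul hb' hY'.1), ?_⟩
      rw [Matrix.add_mul, Matrix.trace_add, Matrix.smul_mul, Matrix.smul_mul,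
        Matrix.trace_smul, Matrix.trace_smul, hY.2, hY'.2, smul_zero, smul_zero, add_zero]
    · intro c hc x hx
      exact ⟨psd_smul hc hx.1, by rw [Matrix.smul_mul, Matrix.trace_smul, hx.2, smul_zero]⟩
    · intro x hx y hy hxy
      have h1 : 0 ≤ (x * (-Z)).trace := trace_mul_psd_nonneg hx hWpsd
      have h2 : 0 ≤ (y * (-Z)).trace := trace_mul_psd_nonneg hy hWpsd
      have h3 : (x * (-Z)).trace + (y * (-Z)).trace = 0 := by
        rw [← Matrix.trace_add, ← Matrix.add_mul]
        exact hxy.2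
      exact ⟨⟨hx, by linarith⟩, ⟨hy, by linarith⟩⟩
  have hXg : X₀ ∈ {Y : Matrix (Fin n) (Fin n) ℝ | Y.PosSemidef ∧ (Y * (-Z)).trace = 0} :=
    ⟨hX₀psd, by rw [Matrix.trace_mul_comm]; exact hWX₀⟩
  have hsub : minFaceOfPoint X₀ ⊆
      {Y : Matrix (Fin n) (Fin n) ℝ | Y.PosSemidef ∧ (Y * (-Z)).trace = 0} :=
    Set.sInter_subset_of_mem ⟨hface, hXg⟩
  have hWconj : (-Z) ∈ conjFace (minFaceOfPoint X₀) :=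
    ⟨hWpsd, fun Y hY => (hsub hY).2⟩
  have hWspan1 : (-Z) ∈ Submodule.span ℝ (conjFace (minFaceOfPoint X₀)) :=
    Submodule.subset_span hWconj
  have hWspan2 : (-Z) ∈ Submodule.span ℝ (Set.range A) := by
    have hW : (-Z) = ∑ i, (-lam i) • A i := by
      rw [hZdef, ← Finset.sum_neg_distrib]
      exact Finset.sum_congr rfl fun i _ => by rw [neg_smul]
    rw [hW]
    exact Submodule.sum_mem _ fun i _ =>
      Submodule.smul_mem _ _ (Submodule.subset_span ⟨i, rfl⟩)
  have hW0 : (-Z) = 0 := by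
    have hmem : (-Z) ∈ (Submodule.span ℝ (conjFace (minFaceOfPoint X₀)) ⊓
        Submodule.span ℝ (Set.range A)) := Submodule.mem_inf.mpr ⟨hWspan1, hWspan2⟩
    rw [hX₀nd] at hmem
    simpa using hmem
  have hZ0 : Z = 0 := by
    rwa [neg_eq_zero] at hW0
  have hlt := hfu _ h1mem
  have hge := hut _ hX₀t
  rw [hfZ, hZ0, Matrix.zero_mul, Matrix.trace_zero] at hlt
  rw [hfZ, hZ0, Matrix.zero_mul, Matrix.trace_zero] at hge
  linarith
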